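/- Let q, r be natural numbers and equip E = (Fin q → ℝ) × (Fin r → ℝ) with the norm ‖(a,b)‖ = max(‖a‖∞, ‖b‖∞), where ‖·‖∞ is the supremum norm on each factor. Let A be a nonempty closed subset of ℝ^q, let h > 0, Δ > h/2, ρ ≥ 0, and c ∈ E. Suppose that every point z = (z_q, z_r) ∈ E, all of whose coordinates (in both components) are integer multiples of h, with ‖z − c‖ ≤ ρ + h, satisfies infDist(z_q, A) ≥ Δ (infimum distance in the supremum norm on ℝ^q). Then every y = (y_q, y_r) ∈ E with ‖y − c‖ ≤ ρ satisfies infDist(y_q, A) ≥ Δ. -/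

import Mathlib

open Metric

/-- Helper: if the grid point `g` nearest to `s` is far above `t`, then the grid point
just above `t` is within `h` of `t` and no farther from `s` than `t` is. -/
lemma grid_key_aux (h t s g : ℝ) (hh : 0 < h) (hgmul : ∃ k : ℤ, g = k * h)
    (hg : |g - s| ≤ h / 2) (hfar : t + h < g) :
    ∃ z : ℝ, (∃ k : ℤ, z = k * h) ∧ |z - t| ≤ h ∧ |z - s| ≤ |s - t| := by
  obtain ⟨m, rfl⟩ := hgmul
  have h1 : t < ((⌊t / h⌋ : ℝ) + 1) * h := by
    have := Int.lt_floor_add_one (t / h)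
    have := (div_lt_iff₀ hh).mp this; linarith
  have h2 : ((⌊t / h⌋ : ℝ) + 1) * h ≤ t + h := by
    have := Int.floor_le (t / h)
    have := (le_div_iff₀ hh).mp this
    nlinarith
  refine ⟨(⌊t / h⌋ + 1) * h, ⟨⌊t / h⌋ + 1, by push_cast; ring⟩, ?_, ?_⟩
  · push_cast
    rw [abs_le]; constructor <;> linarith
  · push_cast
    have hlt : ((⌊t / h⌋ : ℝ) + 1) * h < (m : ℝ) * h := lt_of_le_of_lt h2 hfar
    have hint : (⌊t / h⌋ : ℝ) + 1 < (m : ℝ) := lt_of_mul_lt_mul_right hlt hh.le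
    have hint' : ⌊t / h⌋ + 1 + 1 ≤ m := by exact_mod_cast hint
    have hle : ((⌊t / h⌋ : ℝ) + 1) * h + h ≤ (m : ℝ) * h := by
      have : ((⌊t / h⌋ : ℝ) + 1) + 1 ≤ (m : ℝ) := by exact_mod_cast hint'
      nlinarith
    have hgs := abs_le.mp hg
    have hus : ((⌊t / h⌋ : ℝ) + 1) * h ≤ s - h / 2 := by linarith [hgs.1]
    have heq : |((⌊t / h⌋ : ℝ) + 1) * h - s| = s - ((⌊t / h⌋ : ℝ) + 1) * h := by
      rw [abs_sub_comm, abs_of_nonneg]; linarith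
    rw [heq]
    have : s - t ≤ |s - t| := le_abs_self _
    linarith

/-- For any `t, s` there is a grid point `z` within `h` of `t` and within
`max (h/2) |s - t|` of `s`. -/
lemma grid_key (h : ℝ) (hh : 0 < h) (t s : ℝ) :
    ∃ z : ℝ, (∃ k : ℤ, z = k * h) ∧ |z - t| ≤ h ∧ |z - s| ≤ max (h / 2) (|s - t|) := by
  set g : ℝ := (round (s / h) : ℝ) * h with hgdef
  have hg : |g - s| ≤ h / 2 := by
    have h1 : |s / h - (round (s / h) : ℝ)| ≤ 1 / 2 := abs_sub_round _
    have heq : g - s = ((round (s / h) : ℝ) - s / h) * h := by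
      field_simp [hgdef]
      simp only [hgdef]; ring
    rw [heq, abs_mul, abs_of_pos hh, abs_sub_comm]
    nlinarith
  by_cases hcase : |g - t| ≤ h
  · exact ⟨g, ⟨round (s / h), rfl⟩, hcase, le_trans hg (le_max_left _ _)⟩
  · push_neg at hcase
    rcases lt_abs.mp hcase with hfar | hfar
    · -- t + h < g
      obtain ⟨z, hzk, hzt, hzs⟩ :=
        grid_key_aux h t s g hh ⟨round (s / h), rfl⟩ hg (by linarith)
      exact ⟨z, hzk, hzt, le_trans hzs (le_max_right _ _)⟩
    · -- g < t - h ; apply the helper to the negations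
      obtain ⟨z, hzk, hzt, hzs⟩ :=
        grid_key_aux h (-t) (-s) (-g) hh
          ⟨-round (s / h), by push_cast; rw [hgdef]; ring⟩
          (by rw [show -g - -s = -(g - s) by ring, abs_neg]; exact hg)
          (by linarith)
      obtain ⟨k, hk⟩ := hzk
      refine ⟨-z, ⟨-k, by push_cast; rw [hk]; ring⟩, ?_, ?_⟩
      · rw [show -z - t = -(z - -t) by ring, abs_neg]; exact hzt
      · rw [show -z - s = -(z - -s) by ring, abs_neg]
        refine le_trans hzs (le_trans (le_of_eq ?_) (le_max_right _ _))
        rw [show -s - -t = -(s - t) by ring, abs_neg]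

theorem ball_safe_from_grid_safe
    (q r : ℕ) (A : Set (Fin q → ℝ)) (hAne : A.Nonempty) (hAcl : IsClosed A)
    (h Δ ρ : ℝ) (hh : 0 < h) (hΔ : h / 2 < Δ) (hρ : 0 ≤ ρ)
    (c : (Fin q → ℝ) × (Fin r → ℝ))
    (hgrid : ∀ z : (Fin q → ℝ) × (Fin r → ℝ),
      (∀ i, ∃ k : ℤ, z.1 i = k * h) → (∀ i, ∃ k : ℤ, z.2 i = k * h) →
      ‖z - c‖ ≤ ρ + h → Δ ≤ infDist z.1 A) :
    ∀ y : (Fin q → ℝ) × (Fin r → ℝ), ‖y - c‖ ≤ ρ → Δ ≤ infDist y.1 A := by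
  intro y hy
  by_contra hlt
  push_neg at hlt
  obtain ⟨a, ha, hda⟩ := (infDist_lt_iff hAne).mp hlt
  -- construct grid point z near y, with z.1 close to a
  choose z1 hz1k hz1t hz1s using fun i : Fin q => grid_key h hh (y.1 i) (a i)
  set z2 : Fin r → ℝ := fun i => (round (y.2 i / h) : ℝ) * h with hz2def
  have hz2t : ∀ i, |z2 i - y.2 i| ≤ h / 2 := by
    intro i
    have h1 : |y.2 i / h - (round (y.2 i / h) : ℝ)| ≤ 1 / 2 := abs_sub_round _
    have heq : z2 i - y.2 i = ((round (y.2 i / h) : ℝ) - y.2 i / h) * h := by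
      field_simp [hz2def]
      simp only [hz2def]; ring
    rw [heq, abs_mul, abs_of_pos hh, abs_sub_comm]
    nlinarith
  set z : (Fin q → ℝ) × (Fin r → ℝ) := (z1, z2) with hzdef
  have hzy : ‖z - y‖ ≤ h := by
    rw [Prod.norm_def]
    refine max_le ?_ ?_
    · rw [pi_norm_le_iff_of_nonneg hh.le]
      intro i
      simpa [Real.norm_eq_abs] using hz1t i
    · rw [pi_norm_le_iff_of_nonneg hh.le]
      intro i
      have := hz2t i
      simp only [Prod.snd_sub, Pi.sub_apply, Real.norm_eq_abs]
      linarith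
  have hzc : ‖z - c‖ ≤ ρ + h := by
    calc ‖z - c‖ = ‖(z - y) + (y - c)‖ := by ring_nf
    _ ≤ ‖z - y‖ + ‖y - c‖ := norm_add_le _ _
    _ ≤ h + ρ := add_le_add hzy hy
    _ = ρ + h := by ring
  have hΔz : Δ ≤ infDist z.1 A :=
    hgrid z (fun i => hz1k i) (fun i => ⟨round (y.2 i / h), rfl⟩) hzc
  -- but z.1 is close to a
  have hM : 0 ≤ max (h / 2) (dist y.1 a) := le_max_of_le_left (by linarith)
  have hdza : dist z.1 a ≤ max (h / 2) (dist y.1 a) := by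
    rw [dist_pi_le_iff hM]
    intro i
    have hi : |a i - y.1 i| ≤ dist y.1 a := by
      rw [abs_sub_comm]
      exact le_trans (le_of_eq (Real.dist_eq _ _).symm) (dist_le_pi_dist y.1 a i)
    have := hz1s i
    rcases le_max_iff.mp this with h' | h'
    · exact le_trans (le_of_eq (Real.dist_eq _ _)) (le_max_of_le_left h')
    · exact le_trans (le_of_eq (Real.dist_eq _ _))
        (le_max_of_le_right (le_trans h' hi))
  have : infDist z.1 A ≤ max (h / 2) (dist y.1 a) :=
    le_trans (infDist_le_dist_of_mem ha) hdza
  have hmax : max (h / 2) (dist y.1 a) < Δ := max_lt hΔ hda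
  linarith
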